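/- Let n ≥ 1, 1 ≤ m ≤ n, M_1, …, M_m positive integers, and α ∈ ℝ. Let f be holomorphic on B_n of the diagonal form f(z) = Σ_{l=0}^∞ a_l·(z_1^{M_1}⋯z_m^{M_m})^l with f ∈ D_α(B_n). Let r ∈ ℂ[z_1,…,z_n] be any polynomial with coefficients c_k (k ∈ ℕⁿ), and define its diagonal projection π(r)(z) = Σ_l c_{(M_1 l, …, M_m l, 0, …, 0)}·z_1^{M_1 l}⋯z_m^{M_m l} (a finite sum over those l for which the multi-index (M_1 l,…,M_m l,0,…,0) occurs in r). Then ‖r·f − 1‖_α ≥ ‖π(r)·f − 1‖_α. -/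

import Mathlib

open MeasureTheory
open scoped ENNReal Classical

noncomputable section

/-- The ambient space `ℂⁿ` with the Euclidean norm; the unit ball `𝔹ₙ` is
`Metric.ball (0 : En n) 1` and the unit sphere `𝕊ₙ` is `Metric.sphere (0 : En n) 1`. -/
abbrev En (n : ℕ) := EuclideanSpace ℂ (Fin n)

/-- Lebesgue measure on `ℂⁿ`, transported along the definitional equality
`EuclideanSpace ℂ (Fin n) = (Fin n → ℂ)`. -/
noncomputable instance (n : ℕ) : MeasureSpace (En n) where
  volume := (volume : Measure (Fin n → ℂ)).map (MeasurableEquiv.toLp 2 (Fin n → ℂ))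

/-- `|k| = k₁ + … + kₙ` for a multi-index `k`. -/
def mOrd {n : ℕ} (k : Fin n → ℕ) : ℕ := ∑ i, k i

/-- `k! = k₁! ⋯ kₙ!` for a multi-index `k`. -/
def mFact {n : ℕ} (k : Fin n → ℕ) : ℕ := ∏ i, (k i).factorial

/-- `z^k = z₁^{k₁} ⋯ zₙ^{kₙ}` for a multi-index `k`. -/
def mPow {n : ℕ} (z : En n) (k : Fin n → ℕ) : ℂ := ∏ i, z i ^ k i

/-- The weight `(n+|k|)^α · (n-1)!·k! / (n-1+|k|)!` appearing in the Dirichlet-type norm. -/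
def dWeight (n : ℕ) (α : ℝ) (k : Fin n → ℕ) : ℝ :=
  ((n : ℝ) + mOrd k) ^ α * (((n - 1).factorial * mFact k : ℕ) : ℝ) /
    (((n - 1 + mOrd k).factorial : ℕ) : ℝ)

/-- The squared Dirichlet-type norm `‖·‖²_α` of a family of Taylor coefficients,
valued in `[0,∞]`. -/
def Dnorm2 (n : ℕ) (α : ℝ) (a : (Fin n → ℕ) → ℂ) : ℝ≥0∞ :=
  ∑' k : Fin n → ℕ, ENNReal.ofReal (dWeight n α k * ‖a k‖ ^ 2)

/-- `a` is the family of power-series (Taylor) coefficients of `f` on the unit ball: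
`f z = Σ_k a_k z^k` for every `z` in the ball. -/
def HasCoeffs (n : ℕ) (f : En n → ℂ) (a : (Fin n → ℕ) → ℂ) : Prop :=
  ∀ z ∈ Metric.ball (0 : En n) 1, HasSum (fun k => a k * mPow z k) (f z)

/-- The squared Dirichlet-type norm `‖f‖²_α` of a function, computed through its
power-series coefficients (which are unique when they exist). -/
def DnormF2 (n : ℕ) (α : ℝ) (f : En n → ℂ) : ℝ≥0∞ :=
  sInf {x | ∃ a, HasCoeffs n f a ∧ x = Dnorm2 n α a}

/-- Membership in the Dirichlet-type space `D_α(𝔹ₙ)`. -/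
def MemD (n : ℕ) (α : ℝ) (f : En n → ℂ) : Prop :=
  DifferentiableOn ℂ f (Metric.ball 0 1) ∧ ∃ a, HasCoeffs n f a ∧ Dnorm2 n α a < ⊤

/-- `f` is a cyclic vector of `D_α(𝔹ₙ)`: for every `ε > 0` there is a polynomial `q`
with `‖q·f - 1‖²_α < ε`. -/
def CyclicD (n : ℕ) (α : ℝ) (f : En n → ℂ) : Prop :=
  ∀ ε : ℝ, 0 < ε → ∃ q : MvPolynomial (Fin n) ℂ,
    DnormF2 n α (fun z => MvPolynomial.eval (fun i => z i) q * f z - 1) < ENNReal.ofReal ε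

/-- `μ = (M₁+…+M_m)^{M₁+…+M_m}/(M₁^{M₁}⋯M_m^{M_m})`. -/
def muVal (m : ℕ) (M : Fin m → ℕ) : ℝ :=
  (((∑ i, M i) ^ (∑ i, M i) : ℕ) : ℝ) / ∏ i, ((M i : ℝ) ^ M i)

/-- The diagonal multi-index `(M₁l, …, M_ml, 0, …, 0) ∈ ℕⁿ`. -/
def diagIdx {n m : ℕ} (hmn : m ≤ n) (M : Fin m → ℕ) (l : ℕ) : Fin n → ℕ :=
  fun i => if h : (i : ℕ) < m then M ⟨(i : ℕ), h⟩ * l else 0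

/-! ### Auxiliary lemmas -/

lemma ofScalars_coeff' (d : ℕ → ℂ) (j : ℕ) :
    (FormalMultilinearSeries.ofScalars ℂ d).coeff j = d j := by
  simp only [FormalMultilinearSeries.coeff, FormalMultilinearSeries.ofScalars,
    ContinuousMultilinearMap.smul_apply, ContinuousMultilinearMap.mkPiAlgebraFin_apply,
    smul_eq_mul]
  simp only [Pi.one_def, List.ofFn_const, List.prod_replicate, one_pow, mul_one]

lemma uniq1 (d : ℕ → ℂ) (r : ℝ) (hr : 0 < r)
    (h : ∀ w : ℂ, ‖w‖ < r → HasSum (fun j => d j * w ^ j) 0) : ∀ j, d j = 0 := by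
  have hp : HasFPowerSeriesAt (0 : ℂ → ℂ) (FormalMultilinearSeries.ofScalars ℂ d) 0 := by
    rw [hasFPowerSeriesAt_iff]
    filter_upwards [Metric.ball_mem_nhds (0 : ℂ) hr] with w hw
    have hw' : ‖w‖ < r := by simpa [Metric.mem_ball] using hw
    have := h w hw'
    simp only [Pi.zero_apply, zero_add]
    convert this using 2 with j
    · rfl
    rw [ofScalars_coeff', smul_eq_mul, mul_comm]
  have h0 := hp.eq_zero
  intro j
  rw [← ofScalars_coeff' d j, h0]
  simp [FormalMultilinearSeries.coeff]

lemma uniqN : ∀ (n : ℕ) (d : (Fin n → ℕ) → ℂ) (r : ℝ), 0 < r →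
    (∀ z : Fin n → ℂ, (∀ i, ‖z i‖ < r) →
      HasSum (fun k => d k * ∏ i, z i ^ k i) 0) → ∀ k, d k = 0 := by
  intro n
  induction n with
  | zero =>
    intro d r hr h k
    have h0 := h 0 (fun i => i.elim0)
    have h1 := hasSum_fintype (fun k : Fin 0 → ℕ => d k * ∏ i, (0 : Fin 0 → ℂ) i ^ k i)
    have h2 := h0.unique h1
    have h3 : ∑ k : Fin 0 → ℕ, d k * ∏ i, (0 : Fin 0 → ℂ) i ^ k i = d k := by
      rw [Finset.univ_unique, Finset.sum_singleton]
      simp only [Fin.prod_univ_zero, mul_one]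
      exact congrArg d (Subsingleton.elim _ _)
    rw [h3] at h2
    exact h2.symm
  | succ n IH =>
    intro d r hr h k
    set G : ℕ → (Fin n → ℕ) → ℂ := fun j k' => d (Fin.cons j k') with hG
    have key : ∀ z' : Fin n → ℂ, (∀ i, ‖z' i‖ < r) → ∀ j,
        HasSum (fun k' => G j k' * ∏ i, z' i ^ k' i) 0 := by
      intro z' hz'
      have hw0 : ‖((r/2 : ℝ) : ℂ)‖ < r := by
        rw [Complex.norm_real, Real.norm_eq_abs, abs_of_pos (by linarith)]
        linarith
      have hsum : ∀ (w : ℂ), ‖w‖ < r →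
          HasSum (fun p : ℕ × (Fin n → ℕ) =>
            d (Fin.cons p.1 p.2) * (w ^ p.1 * ∏ i, z' i ^ p.2 i)) 0 := by
        intro w hw
        have hz : ∀ i, ‖(Fin.cons w z' : Fin (n+1) → ℂ) i‖ < r := by
          intro i
          refine Fin.cases ?_ ?_ i
          · simpa using hw
          · intro i'; simpa using hz' i'
        have h2 := h (Fin.cons w z') hz
        have h3 := (Equiv.hasSum_iff (Fin.consEquiv (fun _ : Fin (n+1) => ℕ))).2 h2
        convert h3 using 1
        funext p
        simp only [Function.comp, Fin.consEquiv_apply]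
        congr 1
        rw [Fin.prod_univ_succ]
        simp
      have hslice : ∀ j, Summable (fun k' => G j k' * ∏ i, z' i ^ k' i) := by
        intro j
        have h4 := (hsum ((r/2 : ℝ) : ℂ) hw0).summable
        have hinj : Function.Injective (fun k' : Fin n → ℕ => ((j, k') : ℕ × (Fin n → ℕ))) :=
          fun a b hab => by simpa using congrArg Prod.snd hab
        have h5 := h4.comp_injective hinj
        have hne : (((r/2:ℝ):ℂ) ^ j) ≠ 0 := by
          apply pow_ne_zero
          simp only [ne_eq, Complex.ofReal_eq_zero]
          intro hc; rw [hc] at hw0; simp at hw0; linarith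
        have h5' := h5.congr (g := fun k' => (((r/2:ℝ):ℂ) ^ j) * (G j k' * ∏ i, z' i ^ k' i))
          (fun k' => by simp only [Function.comp, hG]; ring)
        exact (summable_mul_left_iff hne).1 h5'
      set cc : ℕ → ℂ := fun j => ∑' k', G j k' * ∏ i, z' i ^ k' i with hcc
      have hccsum : ∀ j, HasSum (fun k' => G j k' * ∏ i, z' i ^ k' i) (cc j) :=
        fun j => (hslice j).hasSum
      have h7 : ∀ w : ℂ, ‖w‖ < r → HasSum (fun j => cc j * w ^ j) 0 := by
        intro w hw
        refine HasSum.prod_fiberwise (hsum w hw) ?_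
        intro j
        have := (hccsum j).mul_right (w ^ j)
        convert this using 1
        · rfl
        funext k'; simp only [hG]; ring
      have h8 := uniq1 cc r hr h7
      intro j
      have := hccsum j
      rwa [h8 j] at this
    have hGz : ∀ j k', G j k' = 0 := fun j => IH (G j) r hr (fun z' hz' => key z' hz' j)
    have hd : d (Fin.cons (k 0) (Fin.tail k)) = 0 := hGz (k 0) (Fin.tail k)
    rwa [Fin.cons_self_tail] at hd

lemma mPow_add {n : ℕ} (z : En n) (k0 j : Fin n → ℕ) :
    mPow z (k0 + j) = mPow z k0 * mPow z j := by
  unfold mPow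
  rw [← Finset.prod_mul_distrib]
  exact Finset.prod_congr rfl fun i _ => by rw [Pi.add_apply, pow_add]

lemma mPow_zero {n : ℕ} (z : En n) : mPow z 0 = 1 := by
  simp [mPow]

/-- Explicit Taylor coefficients of `(∑_{k∈T} c_k z^k)·f(z) - 1`. -/
lemma hasCoeffs_poly_mul (n : ℕ) (f : En n → ℂ) (A : (Fin n → ℕ) → ℂ)
    (hfa : HasCoeffs n f A) (T : Finset (Fin n → ℕ)) (c : (Fin n → ℕ) → ℂ) :
    HasCoeffs n (fun z => (∑ k ∈ T, c k * mPow z k) * f z - 1)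
      (fun j => (∑ k0 ∈ T, c k0 * (if k0 ≤ j then A (j - k0) else 0))
        - if j = 0 then 1 else 0) := by
  intro z hz
  have h1 : ∀ k0 : Fin n → ℕ,
      HasSum (fun j => A j * mPow z (k0 + j)) (mPow z k0 * f z) := by
    intro k0
    have := (hfa z hz).mul_left (mPow z k0)
    have heq : (fun j => mPow z k0 * (A j * mPow z j))
        = fun j => A j * mPow z (k0 + j) := by
      funext j; rw [mPow_add]; ring
    rwa [heq] at this
  have h2 : ∀ k0 : Fin n → ℕ,
      HasSum (fun j => (if k0 ≤ j then A (j - k0) else 0) * mPow z j)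
        (mPow z k0 * f z) := by
    intro k0
    have hinj : Function.Injective (fun j : Fin n → ℕ => k0 + j) :=
      fun a b hab => by simpa using hab
    have hzero : ∀ j ∉ Set.range (fun j : Fin n → ℕ => k0 + j),
        (if k0 ≤ j then A (j - k0) else 0) * mPow z j = 0 := by
      intro j hj
      rw [if_neg, zero_mul]
      intro hle
      exact hj ⟨j - k0, add_tsub_cancel_of_le hle⟩
    refine (Function.Injective.hasSum_iff hinj hzero).1 ?_
    have heq : ((fun j => (if k0 ≤ j then A (j - k0) else 0) * mPow z j)
        ∘ (fun j : Fin n → ℕ => k0 + j)) = fun j => A j * mPow z (k0 + j) := by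
      funext j
      simp only [Function.comp, if_pos (le_self_add : k0 ≤ k0 + j), add_tsub_cancel_left]
    rw [heq]
    exact h1 k0
  have h3 : HasSum
      (fun j => ∑ k0 ∈ T, c k0 * ((if k0 ≤ j then A (j - k0) else 0) * mPow z j))
      (∑ k0 ∈ T, c k0 * (mPow z k0 * f z)) :=
    hasSum_sum fun k0 _ => (h2 k0).mul_left (c k0)
  have h4 : HasSum (fun j : Fin n → ℕ => if j = 0 then (1:ℂ) else 0) 1 :=
    hasSum_ite_eq 0 1
  have h5 := h3.sub h4
  have heq : (fun j => (∑ k0 ∈ T, c k0 * ((if k0 ≤ j then A (j - k0) else 0) * mPow z j))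
        - (if j = 0 then (1:ℂ) else 0))
      = fun j => ((∑ k0 ∈ T, c k0 * (if k0 ≤ j then A (j - k0) else 0))
        - if j = 0 then 1 else 0) * mPow z j := by
    funext j
    rw [sub_mul, Finset.sum_mul]
    congr 1
    · exact Finset.sum_congr rfl fun k0 _ => by ring
    · by_cases hj : j = 0
      · rw [hj, mPow_zero]; simp
      · simp [hj, if_neg hj]
  rw [heq] at h5
  have hval : (∑ k0 ∈ T, c k0 * (mPow z k0 * f z)) - 1
      = (∑ k ∈ T, c k * mPow z k) * f z - 1 := by
    rw [Finset.sum_mul]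
    congr 1
    exact Finset.sum_congr rfl fun k0 _ => by ring
  rwa [hval] at h5

/-- Taylor coefficients on the unit ball are unique. -/
lemma hasCoeffs_unique (n : ℕ) (hn : 1 ≤ n) (g : En n → ℂ) (b1 b2 : (Fin n → ℕ) → ℂ)
    (h1 : HasCoeffs n g b1) (h2 : HasCoeffs n g b2) : b1 = b2 := by
  have hr : (0:ℝ) < 1 / n := by positivity
  have key : ∀ z : Fin n → ℂ, (∀ i, ‖z i‖ < 1 / n) →
      HasSum (fun k => (b1 k - b2 k) * ∏ i, z i ^ k i) 0 := by
    intro z hzp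
    set zE : En n := WithLp.toLp 2 z with hzE
    have hball : zE ∈ Metric.ball (0 : En n) 1 := by
      rw [mem_ball_zero_iff]
      have hne : (Finset.univ : Finset (Fin n)).Nonempty := by
        rw [Finset.univ_nonempty_iff]
        exact Fin.pos_iff_nonempty.1 hn
      have hsum : ∑ i, ‖z i‖ ^ 2 < 1 := by
        calc ∑ i, ‖z i‖ ^ 2 < ∑ _i : Fin n, (1/(n:ℝ))^2 := by
              refine Finset.sum_lt_sum_of_nonempty hne fun i _ => ?_
              have h := hzp i
              have h0 := norm_nonneg (z i)
              nlinarith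
          _ = n * (1/(n:ℝ))^2 := by
              rw [Finset.sum_const, Finset.card_univ, Fintype.card_fin, nsmul_eq_mul]
          _ ≤ 1 := by
              have hn' : (1:ℝ) ≤ (n:ℝ) := by exact_mod_cast hn
              rw [div_pow, one_pow, mul_one_div, div_le_one (by positivity)]
              nlinarith
      calc ‖zE‖ = Real.sqrt (∑ i, ‖zE i‖ ^ 2) := EuclideanSpace.norm_eq zE
        _ < 1 := by
            rw [show (1:ℝ) = Real.sqrt 1 from (Real.sqrt_one).symm]
            exact Real.sqrt_lt_sqrt (by positivity) (by simpa [hzE] using hsum)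
    have := (h1 zE hball).sub (h2 zE hball)
    rw [sub_self] at this
    have heq : (fun k => b1 k * mPow zE k - b2 k * mPow zE k)
        = fun k => (b1 k - b2 k) * ∏ i, z i ^ k i := by
      funext k; rw [sub_mul]; rfl
    rwa [heq] at this
  funext k
  exact sub_eq_zero.1 (uniqN n (fun k => b1 k - b2 k) (1/n) hr key k)

lemma diagIdx_add {n m : ℕ} (hmn : m ≤ n) (M : Fin m → ℕ) (l1 l2 : ℕ) :
    diagIdx hmn M l1 + diagIdx hmn M l2 = diagIdx hmn M (l1 + l2) := by
  funext i
  simp only [Pi.add_apply, diagIdx]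
  split
  · rw [mul_add]
  · rw [add_zero]

lemma diagIdx_zero {n m : ℕ} (hmn : m ≤ n) (M : Fin m → ℕ) :
    diagIdx hmn M 0 = 0 := by
  funext i
  simp [diagIdx]

/-- The Taylor coefficients of `(∑_{k∈T} c_k z^k)·f(z) - 1` where `f` has coefficients `A`. -/
def projCoeff (n : ℕ) (A c : (Fin n → ℕ) → ℂ) (T : Finset (Fin n → ℕ)) :
    (Fin n → ℕ) → ℂ :=
  fun j => (∑ k0 ∈ T, c k0 * (if k0 ≤ j then A (j - k0) else 0)) - if j = 0 then 1 else 0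

lemma hasCoeffs_projCoeff (n : ℕ) (f : En n → ℂ) (A : (Fin n → ℕ) → ℂ)
    (hfa : HasCoeffs n f A) (T : Finset (Fin n → ℕ)) (c : (Fin n → ℕ) → ℂ) :
    HasCoeffs n (fun z => (∑ k ∈ T, c k * mPow z k) * f z - 1) (projCoeff n A c T) :=
  hasCoeffs_poly_mul n f A hfa T c

lemma projCoeff_off {n m : ℕ} (hmn : m ≤ n) (M : Fin m → ℕ)
    (A c : (Fin n → ℕ) → ℂ)
    (hA2 : ∀ k, (∀ l, k ≠ diagIdx hmn M l) → A k = 0)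
    (S : Finset (Fin n → ℕ)) (j : Fin n → ℕ) (hj : ∀ l, j ≠ diagIdx hmn M l) :
    projCoeff n A c (S.filter fun k => ∃ l, k = diagIdx hmn M l) j = 0 := by
  unfold projCoeff
  have hδ : (if j = 0 then (1:ℂ) else 0) = 0 := by
    rw [if_neg]
    intro h0
    exact hj 0 (h0.trans (diagIdx_zero hmn M).symm)
  have hsum0 : ∑ k0 ∈ S.filter (fun k => ∃ l, k = diagIdx hmn M l),
      c k0 * (if k0 ≤ j then A (j - k0) else 0) = 0 := by
    refine Finset.sum_eq_zero ?_
    intro k0 hk0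
    obtain ⟨-, l0, hl0⟩ := Finset.mem_filter.1 hk0
    have hz : (if k0 ≤ j then A (j - k0) else 0) = 0 := by
      split_ifs with hle
      · apply hA2
        intro l hl
        apply hj (l0 + l)
        rw [← diagIdx_add, ← hl0, ← hl]
        exact (add_tsub_cancel_of_le hle).symm
      · rfl
    rw [hz, mul_zero]
  rw [hsum0, hδ, sub_zero]

lemma projCoeff_diag {n m : ℕ} (hmn : m ≤ n) (M : Fin m → ℕ) (hM : ∀ i, 1 ≤ M i)
    (A c : (Fin n → ℕ) → ℂ)
    (hA2 : ∀ k, (∀ l, k ≠ diagIdx hmn M l) → A k = 0)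
    (S : Finset (Fin n → ℕ)) (l' : ℕ) :
    projCoeff n A c (S.filter fun k => ∃ l, k = diagIdx hmn M l) (diagIdx hmn M l')
      = projCoeff n A c S (diagIdx hmn M l') := by
  unfold projCoeff
  congr 1
  refine Finset.sum_subset (Finset.filter_subset _ S) ?_
  intro k0 hk0S hk0n
  have hnp : ¬∃ l, k0 = diagIdx hmn M l :=
    fun hp => hk0n (Finset.mem_filter.2 ⟨hk0S, hp⟩)
  have hz : (if k0 ≤ diagIdx hmn M l' then A (diagIdx hmn M l' - k0) else 0) = 0 := by
    split_ifs with hle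
    · by_contra hA0
      obtain ⟨l, hl⟩ : ∃ l, diagIdx hmn M l' - k0 = diagIdx hmn M l := by
        by_contra hno
        push_neg at hno
        exact hA0 (hA2 _ hno)
      apply hnp
      -- first, l ≤ l' and k0 = diagIdx (l' - l)
      refine ⟨l' - l, ?_⟩
      funext i
      have hlei : k0 i ≤ diagIdx hmn M l' i := (Pi.le_def.1 hle) i
      have hli : diagIdx hmn M l' i - k0 i = diagIdx hmn M l i := congrFun hl i
      by_cases h : (i : ℕ) < m
      · have hd1 : diagIdx hmn M l' i = M ⟨(i:ℕ), h⟩ * l' := by simp [diagIdx, h]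
        have hd2 : diagIdx hmn M l i = M ⟨(i:ℕ), h⟩ * l := by simp [diagIdx, h]
        have hd3 : diagIdx hmn M (l' - l) i = M ⟨(i:ℕ), h⟩ * (l' - l) := by simp [diagIdx, h]
        rw [hd1] at hlei hli
        rw [hd2] at hli
        rw [hd3]
        have hMl : M ⟨(i:ℕ), h⟩ * l ≤ M ⟨(i:ℕ), h⟩ * l' := by omega
        have hll : l ≤ l' := Nat.le_of_mul_le_mul_left hMl (hM _)
        obtain ⟨t, rfl⟩ := Nat.exists_eq_add_of_le hll
        have ht : l + t - l = t := by omega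
        rw [ht, mul_add] at *
        omega
      · have hd1 : diagIdx hmn M l' i = 0 := by simp [diagIdx, h]
        have hd3 : diagIdx hmn M (l' - l) i = 0 := by simp [diagIdx, h]
        rw [hd1] at hlei
        omega
    · rfl
  rw [hz, mul_zero]

/-- for a diagonal function `f ∈ D_α(𝔹ₙ)` and any polynomial
`r(z) = Σ_{k ∈ S} c_k z^k`, projecting `r` onto its diagonal part `π(r)` does not
increase the distance to `1`: `‖r·f - 1‖_α ≥ ‖π(r)·f - 1‖_α`. -/
theorem stmt_7 (n m : ℕ) (hn : 1 ≤ n) (hm : 1 ≤ m) (hmn : m ≤ n)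
    (M : Fin m → ℕ) (hM : ∀ i, 1 ≤ M i) (α : ℝ)
    (f : En n → ℂ) (a : ℕ → ℂ) (A : (Fin n → ℕ) → ℂ)
    (hfd : DifferentiableOn ℂ f (Metric.ball 0 1))
    (hfa : HasCoeffs n f A)
    (hA1 : ∀ l, A (diagIdx hmn M l) = a l)
    (hA2 : ∀ k, (∀ l, k ≠ diagIdx hmn M l) → A k = 0)
    (hfin : Dnorm2 n α A < ⊤)
    (S : Finset (Fin n → ℕ)) (c : (Fin n → ℕ) → ℂ) :
    DnormF2 n α (fun z =>
        (∑ k ∈ S.filter (fun k => ∃ l, k = diagIdx hmn M l), c k * mPow z k) * f z - 1) ≤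
      DnormF2 n α (fun z => (∑ k ∈ S, c k * mPow z k) * f z - 1) := by
  refine le_sInf ?_
  rintro x ⟨b, hb, rfl⟩
  have hbE : b = projCoeff n A c S :=
    hasCoeffs_unique n hn _ b (projCoeff n A c S) hb (hasCoeffs_projCoeff n f A hfa S c)
  have hL : DnormF2 n α (fun z =>
      (∑ k ∈ S.filter (fun k => ∃ l, k = diagIdx hmn M l), c k * mPow z k) * f z - 1)
      ≤ Dnorm2 n α (projCoeff n A c (S.filter fun k => ∃ l, k = diagIdx hmn M l)) :=
    sInf_le ⟨_, hasCoeffs_projCoeff n f A hfa _ c, rfl⟩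
  have hnormle : ∀ j, ‖projCoeff n A c (S.filter fun k => ∃ l, k = diagIdx hmn M l) j‖
      ≤ ‖projCoeff n A c S j‖ := by
    intro j
    by_cases hd : ∃ l, j = diagIdx hmn M l
    · obtain ⟨l', rfl⟩ := hd
      rw [projCoeff_diag hmn M hM A c hA2 S l']
    · push_neg at hd
      rw [projCoeff_off hmn M A c hA2 S j hd]
      simp
  have hmono : Dnorm2 n α (projCoeff n A c (S.filter fun k => ∃ l, k = diagIdx hmn M l))
      ≤ Dnorm2 n α (projCoeff n A c S) := by
    unfold Dnorm2
    refine ENNReal.tsum_le_tsum fun j => ENNReal.ofReal_le_ofReal ?_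
    have hw : 0 ≤ dWeight n α j := by
      unfold dWeight
      positivity
    exact mul_le_mul_of_nonneg_left
      (pow_le_pow_left₀ (norm_nonneg _) (hnormle j) 2) hw
  exact hL.trans (hmono.trans (by rw [hbE]))
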